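/- Let A : T → ℝⁿ be a monotone allocation rule on a single-parameter domain T = T₁ × ... × Tₙ (each Tᵢ an open interval), with ∫_{-∞}^{bᵢ} Aᵢ(b₋ᵢ, u) du < ∞ for all i and b. Define payments by Pᵢ(b) = bᵢ·Aᵢ(b) − ∫_{-∞}^{bᵢ} Aᵢ(b₋ᵢ,u) du. Then for every agent i, type tᵢ, bid bᵢ ∈ Tᵢ, and bids b₋ᵢ: tᵢ·Aᵢ(b₋ᵢ,tᵢ) − Pᵢ(b₋ᵢ,tᵢ) ≥ tᵢ·Aᵢ(b₋ᵢ,bᵢ) − Pᵢ(b₋ᵢ,bᵢ) (truthfulness), and tᵢ·Aᵢ(b₋ᵢ,tᵢ) − Pᵢ(b₋ᵢ,tᵢ) ≥ 0 (individual rationality). -/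

import Mathlib

set_option maxHeartbeats 1000000


open MeasureTheory

/-- Myerson/Archer–Tardos, "if" direction with normalized payments.  Let `A` be a monotone
(nonnegative) allocation rule on a single-parameter domain `T = T₁ × ⋯ × Tₙ` (each `Tᵢ` a
nonempty open interval), interpreted as `0` outside `Tᵢ`, with finite Myerson integrals.
Define payments `Pᵢ(b) = bᵢ·Aᵢ(b) − ∫_{-∞}^{bᵢ} Aᵢ(b₋ᵢ,u) du`.  Then for every agent `i`,
true type `tᵢ ∈ Tᵢ`, bid `bᵢ ∈ Tᵢ` and bids `b₋ᵢ` of the others, truthful bidding maximizes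
the utility `tᵢ·Aᵢ − Pᵢ` (truthfulness) and yields nonnegative utility (individual
rationality). -/
theorem stmt_11 {n : ℕ} (T : Fin n → Set ℝ)
    (hT : ∀ i, IsOpen (T i) ∧ (T i).OrdConnected ∧ (T i).Nonempty)
    (A : (Fin n → ℝ) → Fin n → ℝ)
    (hnonneg : ∀ b i, 0 ≤ A b i)
    (hzero : ∀ (i : Fin n) (b : Fin n → ℝ) (u : ℝ), u ∉ T i →
      A (Function.update b i u) i = 0)
    (hmono : ∀ (i : Fin n) (b : Fin n → ℝ),
      MonotoneOn (fun u => A (Function.update b i u) i) (T i))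
    (hint : ∀ (i : Fin n) (b : Fin n → ℝ),
      IntegrableOn (fun u => A (Function.update b i u) i) (Set.Iio (b i)))
    (P : (Fin n → ℝ) → Fin n → ℝ)
    (hP : ∀ (b : Fin n → ℝ) (i : Fin n),
      P b i = b i * A b i - ∫ u in Set.Iio (b i), A (Function.update b i u) i) :
    ∀ (i : Fin n) (b : Fin n → ℝ) (t : ℝ), (∀ j, b j ∈ T j) → t ∈ T i →
      (t * A (Function.update b i t) i - P (Function.update b i t) i
          ≥ t * A b i - P b i) ∧
      0 ≤ t * A (Function.update b i t) i - P (Function.update b i t) i := by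
  intro i b t hb ht
  set f : ℝ → ℝ := fun u => A (Function.update b i u) i with hf
  -- integrability of f on any Iio x
  have hf_int : ∀ x : ℝ, IntegrableOn f (Set.Iio x) := by
    intro x
    have := hint i (Function.update b i x)
    simpa [hf, Function.update_idem, Function.update_self] using this
  have hfb : A b i = f (b i) := by simp [hf]
  have hft : A (Function.update b i t) i = f t := rfl
  have hPt : P (Function.update b i t) i = t * f t - ∫ u in Set.Iio t, f u := by
    rw [hP]
    simp [hf, Function.update_idem, Function.update_self]
  have hPb : P b i = b i * f (b i) - ∫ u in Set.Iio (b i), f u := by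
    rw [hP, hfb]
  have hfnn : ∀ u, 0 ≤ f u := fun u => hnonneg _ _
  -- key: ∫_{Iio t} f - ∫_{Iio x} f ≥ (t - x) * f x for x ∈ T i
  have key : ∀ x ∈ T i, (t - x) * f x ≤ (∫ u in Set.Iio t, f u) - ∫ u in Set.Iio x, f u := by
    intro x hx
    rcases le_total x t with hxt | htx
    · have hsub : Set.Icc x t ⊆ T i := (hT i).2.1.out hx ht
      have hunion : Set.Iio x ∪ Set.Ico x t = Set.Iio t := Set.Iio_union_Ico_eq_Iio hxt
      have hint1 : IntegrableOn f (Set.Ico x t) :=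
        (hf_int t).mono_set (fun u hu => lt_of_lt_of_le hu.2 le_rfl)
      have hsplit : (∫ u in Set.Iio t, f u) =
          (∫ u in Set.Iio x, f u) + ∫ u in Set.Ico x t, f u := by
        have hdisj : Disjoint (Set.Iio x) (Set.Ico x t) :=
          Set.disjoint_left.2 fun u hu hu2 => absurd hu2.1 (not_le.2 hu)
        rw [← hunion, setIntegral_union hdisj measurableSet_Ico (hf_int x) hint1]
      rw [hsplit]
      have hconst : (t - x) * f x ≤ ∫ u in Set.Ico x t, f u := by
        have : ∫ u in Set.Ico x t, f x = (t - x) * f x := by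
          simp [Real.volume_Ico, ENNReal.toReal_ofReal (sub_nonneg.2 hxt), mul_comm, hxt]
        rw [← this]
        refine setIntegral_mono_on (integrableOn_const (by simp [Real.volume_Ico]
          )) hint1 measurableSet_Ico ?_
        intro u hu
        exact hmono i b hx (hsub ⟨hu.1, hu.2.le⟩) hu.1
      linarith
    · have hsub : Set.Icc t x ⊆ T i := (hT i).2.1.out ht hx
      have hunion : Set.Iio t ∪ Set.Ico t x = Set.Iio x := Set.Iio_union_Ico_eq_Iio htx
      have hint1 : IntegrableOn f (Set.Ico t x) :=
        (hf_int x).mono_set (fun u hu => hu.2)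
      have hsplit : (∫ u in Set.Iio x, f u) =
          (∫ u in Set.Iio t, f u) + ∫ u in Set.Ico t x, f u := by
        have hdisj : Disjoint (Set.Iio t) (Set.Ico t x) :=
          Set.disjoint_left.2 fun u hu hu2 => absurd hu2.1 (not_le.2 hu)
        rw [← hunion, setIntegral_union hdisj measurableSet_Ico (hf_int t) hint1]
      rw [hsplit]
      have hconst : (∫ u in Set.Ico t x, f u) ≤ (x - t) * f x := by
        have : ∫ u in Set.Ico t x, f x = (x - t) * f x := by
          simp [Real.volume_Ico, ENNReal.toReal_ofReal (sub_nonneg.2 htx), mul_comm, htx]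
        rw [← this]
        refine setIntegral_mono_on hint1 (integrableOn_const (by
          simp [Real.volume_Ico])) measurableSet_Ico ?_
        intro u hu
        exact hmono i b (hsub ⟨hu.1, hu.2.le⟩) hx hu.2.le
      linarith
  constructor
  · have := key (b i) (hb i)
    rw [hft, hfb, hPt, hPb]
    linarith
  · rw [hft, hPt]
    have : 0 ≤ ∫ u in Set.Iio t, f u :=
      setIntegral_nonneg measurableSet_Iio (fun u _ => hfnn u)
    linarith
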